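/- Largest eigenvalue of random tree-networks with bounded degree, case 0 < α ≤ 1: fix constants c > 0, an integer d ≥ 3, and α ∈ (0,1]. Let (b_n) satisfy b_n / log log n → ∞ and b_n = O(log n), and let (a_n) satisfy a_n / (b_n^{α/2}·(log n)^{1−α/2}) → ∞. For each n, let T_n be a finite tree with maximum degree at most d and |V(T_n)| ≤ c·log n / b_n, equipped with edge-weights (Y_{ij})_{{i,j}∈E(T_n)} that are i.i.d. copies of a Weibull random variable with shape parameter α conditioned on being greater than b_n^{1/α} in absolute value, and let λ₁(n) denote the largest eigenvalue of the corresponding symmetric weighted adjacency matrix. Then n · P( λ₁(n) ≥ (log n)^{1/α} + a_n^{1/α} ) → 0 as n → ∞. -/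

import Mathlib

open MeasureTheory ProbabilityTheory Filter Real
open scoped ENNReal NNReal

noncomputable section

instance matrixMeasurableSpace {m n α : Type*} [MeasurableSpace α] :
    MeasurableSpace (Matrix m n α) :=
  inferInstanceAs (MeasurableSpace (m → n → α))

/-- The largest eigenvalue of a real square matrix: the supremum of its real eigenvalues. -/
def lam1 {n : ℕ} (M : Matrix (Fin n) (Fin n) ℝ) : ℝ :=
  sSup {r : ℝ | ∃ v : Fin n → ℝ, v ≠ 0 ∧ M.mulVec v = r • v}

/-- A Weibull distribution with shape parameter `α` and constants `C₁ C₂`. -/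
def IsWeibull (α C₁ C₂ : ℝ) (μ : Measure ℝ) : Prop :=
  IsProbabilityMeasure μ ∧
  ∀ t : ℝ, 1 ≤ t →
    ENNReal.ofReal (C₁ * Real.exp (-t ^ α) / 2) ≤ μ {x | t ≤ x} ∧
    μ {x | t ≤ x} ≤ ENNReal.ofReal (C₂ * Real.exp (-t ^ α) / 2) ∧
    ENNReal.ofReal (C₁ * Real.exp (-t ^ α) / 2) ≤ μ {x | x ≤ -t} ∧
    μ {x | x ≤ -t} ≤ ENNReal.ofReal (C₂ * Real.exp (-t ^ α) / 2)

open Classical in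
/-- The sum of `f i j` over the undirected edges `{i, j}` of `G`
(assuming `f` is symmetric, each undirected edge is counted once). -/
def edgeSum {m : ℕ} (G : SimpleGraph (Fin m)) (f : Fin m → Fin m → ℝ) : ℝ :=
  (∑ i, ∑ j, if G.Adj i j then f i j else 0) / 2

/-- The maximum degree of `G` is at most `d`. -/
def MaxDegLE {m : ℕ} (G : SimpleGraph (Fin m)) (d : ℕ) : Prop :=
  ∀ v, {w | G.Adj v w}.ncard ≤ d

open Classical in
/-- The weighted adjacency matrix of the network `(G, Y)`: entry `Y i j` if `{i,j}` is an
edge of `G`, and `0` otherwise. -/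
def weightedAdj {m : ℕ} (G : SimpleGraph (Fin m)) (Y : Fin m → Fin m → ℝ) :
    Matrix (Fin m) (Fin m) ℝ :=
  Matrix.of fun i j => if G.Adj i j then Y i j else 0

open Set
set_option maxHeartbeats 1000000

lemma rpow_add_le_add_rpow' {p x y : ℝ} (hx : 0 ≤ x) (hy : 0 ≤ y) (hp : 0 ≤ p) (hp1 : p ≤ 1) :
    (x + y) ^ p ≤ x ^ p + y ^ p := by
  have := NNReal.rpow_add_le_add_rpow (x.toNNReal) (y.toNNReal) hp hp1
  have h := (NNReal.coe_le_coe).2 this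
  push_cast at h
  rwa [Real.coe_toNNReal _ hx, Real.coe_toNNReal _ hy] at h

lemma rpow_sum_le_sum_rpow {ι : Type*} (s : Finset ι) (f : ι → ℝ) {p : ℝ}
    (hf : ∀ i ∈ s, 0 ≤ f i) (hp : 0 < p) (hp1 : p ≤ 1) :
    (∑ i ∈ s, f i) ^ p ≤ ∑ i ∈ s, f i ^ p := by
  classical
  induction s using Finset.induction_on with
  | empty => simp [Real.zero_rpow hp.ne']
  | insert _ _ hnot ih =>
    rename_i a s
    rw [Finset.sum_insert hnot, Finset.sum_insert hnot]
    have h1 : (f a + ∑ i ∈ s, f i) ^ p ≤ f a ^ p + (∑ i ∈ s, f i) ^ p :=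
      rpow_add_le_add_rpow' (hf a (Finset.mem_insert_self a s))
        (Finset.sum_nonneg fun i hi => hf i (Finset.mem_insert_of_mem hi)) hp.le hp1
    exact h1.trans (by
      gcongr
      exact ih fun i hi => hf i (Finset.mem_insert_of_mem hi))

lemma eigen_row_bound {n : ℕ} (M : Matrix (Fin n) (Fin n) ℝ) {t : ℝ} (ht : 0 < t)
    (h : t ≤ lam1 M) : ∃ i, t ≤ ∑ j, |M i j| := by
  classical
  set S := {r : ℝ | ∃ v : Fin n → ℝ, v ≠ 0 ∧ M.mulVec v = r • v} with hS
  have h' : t ≤ sSup S := h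
  rcases Set.eq_empty_or_nonempty S with hemp | hne
  · rw [hemp, Real.sSup_empty] at h'
    linarith
  · obtain ⟨r₀, v₀, hv₀, hv₀e⟩ := hne
    have hn : 0 < n := by
      rcases Nat.eq_zero_or_pos n with h0 | h0
      · exfalso; apply hv₀; subst h0; funext i; exact absurd i.2 (by omega)
      · exact h0
    have hnee : Nonempty (Fin n) := ⟨⟨0, hn⟩⟩
    have hne' : S.Nonempty := ⟨r₀, v₀, hv₀, hv₀e⟩
    set R := Finset.univ.sup' Finset.univ_nonempty (fun i => ∑ j, |M i j|) with hR
    have hub : ∀ r ∈ S, r ≤ R := by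
      rintro r ⟨v, hv, hMv⟩
      obtain ⟨i₀, -, hmax⟩ := Finset.exists_max_image Finset.univ (fun i => |v i|)
        ⟨⟨0, hn⟩, Finset.mem_univ _⟩
      have hvi₀ : 0 < |v i₀| := by
        by_contra hle
        push_neg at hle
        apply hv; funext j
        have h1 := hmax j (Finset.mem_univ j)
        have h2 : |v j| ≤ 0 := le_trans h1 hle
        have := abs_nonneg (v j)
        have : |v j| = 0 := le_antisymm h2 this
        simpa using this
      have hrow : |r| * |v i₀| ≤ (∑ j, |M i₀ j|) * |v i₀| := by
        have h1 : M.mulVec v i₀ = r * v i₀ := by rw [hMv]; rfl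
        calc |r| * |v i₀| = |r * v i₀| := (abs_mul r (v i₀)).symm
          _ = |∑ j, M i₀ j * v j| := by rw [← h1]; rfl
          _ ≤ ∑ j, |M i₀ j * v j| := Finset.abs_sum_le_sum_abs _ _
          _ ≤ ∑ j, |M i₀ j| * |v i₀| := by
              apply Finset.sum_le_sum
              intro j _
              rw [abs_mul]
              exact mul_le_mul_of_nonneg_left (hmax j (Finset.mem_univ j)) (abs_nonneg _)
          _ = (∑ j, |M i₀ j|) * |v i₀| := by rw [Finset.sum_mul]
      have hr : |r| ≤ ∑ j, |M i₀ j| := le_of_mul_le_mul_right hrow hvi₀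
      have : (fun i => ∑ j, |M i j|) i₀ ≤ R :=
        Finset.le_sup' (f := fun i => ∑ j, |M i j|) (Finset.mem_univ i₀)
      exact le_trans (le_abs_self r) (hr.trans this)
    have htR : t ≤ R := le_trans h' (csSup_le hne' hub)
    obtain ⟨i, -, hi⟩ := Finset.exists_mem_eq_sup' (Finset.univ_nonempty (α := Fin n))
      (fun i => ∑ j, |M i j|)
    refine ⟨i, ?_⟩
    have : R = ∑ j, |M i j| := hi
    linarith

lemma mgf_tail_bound {ν : Measure ℝ} [IsProbabilityMeasure ν] {Z : ℝ → ℝ}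
    (hZm : Measurable Z) (hZ0 : ∀ x, 0 ≤ Z x) {K₀ : ℝ} (hK₀ : 0 < K₀)
    (htail : ∀ s : ℝ, 0 < s → ν {x | s ≤ Z x} ≤ ENNReal.ofReal (K₀ * Real.exp (-s)))
    {θ : ℝ} (hθ0 : 0 < θ) (hθ1 : θ < 1) :
    Integrable (fun x => Real.exp (θ * Z x)) ν ∧
    ∫ x, Real.exp (θ * Z x) ∂ν ≤ 2 + K₀ / (1 - θ) := by
  set f : ℝ → ℝ := fun x => Real.exp (θ * Z x) - 1 with hf
  have hf0 : ∀ x, 0 ≤ f x := by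
    intro x
    have : (0:ℝ) ≤ θ * Z x := mul_nonneg hθ0.le (hZ0 x)
    simp only [hf, sub_nonneg]
    calc (1:ℝ) = Real.exp 0 := (Real.exp_zero).symm
      _ ≤ Real.exp (θ * Z x) := Real.exp_le_exp.2 this
  have hfm : Measurable f := ((hZm.const_mul θ).exp).sub measurable_const
  have hlayer : ∫⁻ x, ENNReal.ofReal (f x) ∂ν = ∫⁻ t in Ioi (0:ℝ), ν {x | t ≤ f x} :=
    lintegral_eq_lintegral_meas_le ν (Filter.Eventually.of_forall hf0) hfm.aemeasurable
  -- pointwise bound on the tail for t > 0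
  have hsets : ∀ t : ℝ, 0 < t → ν {x | t ≤ f x} ≤ ENNReal.ofReal (K₀ * (1 + t) ^ (-(1/θ))) := by
    intro t ht
    have h1t : (0:ℝ) < 1 + t := by linarith
    have hseteq : {x | t ≤ f x} = {x | Real.log (1 + t) / θ ≤ Z x} := by
      ext x
      simp only [Set.mem_setOf_eq, hf]
      constructor
      · intro hx
        have h2 : 1 + t ≤ Real.exp (θ * Z x) := by linarith
        have h3 : Real.log (1 + t) ≤ θ * Z x := (Real.log_le_iff_le_exp h1t).2 h2
        rw [div_le_iff₀ hθ0] ; linarith [h3]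
      · intro hx
        have h3 : Real.log (1 + t) ≤ θ * Z x := by
          rw [div_le_iff₀ hθ0] at hx ; linarith
        have h2 : 1 + t ≤ Real.exp (θ * Z x) := (Real.log_le_iff_le_exp h1t).1 h3
        linarith
    have hlogpos : 0 < Real.log (1 + t) := Real.log_pos (by linarith)
    have hspos : 0 < Real.log (1 + t) / θ := div_pos hlogpos hθ0
    rw [hseteq]
    refine (htail _ hspos).trans ?_
    apply ENNReal.ofReal_le_ofReal
    have : Real.exp (-(Real.log (1 + t) / θ)) = (1 + t) ^ (-(1/θ)) := by
      rw [Real.rpow_def_of_pos h1t]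
      congr 1
      field_simp
    rw [← this]
  -- split the integral
  have hsplit : (Ioi (0:ℝ)) = Ioc (0:ℝ) 1 ∪ Ioi 1 := (Set.Ioc_union_Ioi_eq_Ioi zero_le_one).symm
  have hbound1 : ∫⁻ t in Ioc (0:ℝ) 1, ν {x | t ≤ f x} ≤ 1 := by
    calc ∫⁻ t in Ioc (0:ℝ) 1, ν {x | t ≤ f x} ≤ ∫⁻ _ in Ioc (0:ℝ) 1, 1 :=
          lintegral_mono fun t => prob_le_one
      _ = 1 := by simp
  have hInt : IntegrableOn (fun t : ℝ => K₀ * t ^ (-(1/θ))) (Ioi 1) := by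
    apply Integrable.const_mul
    exact integrableOn_Ioi_rpow_of_lt (by rw [neg_lt_neg_iff]; rw [lt_div_iff₀ hθ0]; linarith)
      one_pos
  have hval : ∫ t in Ioi (1:ℝ), K₀ * t ^ (-(1/θ)) = K₀ * (θ / (1 - θ)) := by
    rw [MeasureTheory.integral_const_mul]
    rw [integral_Ioi_rpow_of_lt (by rw [neg_lt_neg_iff]; rw [lt_div_iff₀ hθ0]; linarith) one_pos]
    rw [Real.one_rpow]
    congr 1
    have h1 : -(1/θ) + 1 = -((1-θ)/θ) := by field_simp; ring
    rw [h1, neg_div_neg_eq, one_div_div]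
  have hbound2 : ∫⁻ t in Ioi (1:ℝ), ν {x | t ≤ f x} ≤ ENNReal.ofReal (K₀ * (θ / (1 - θ))) := by
    have step1 : ∫⁻ t in Ioi (1:ℝ), ν {x | t ≤ f x}
        ≤ ∫⁻ t in Ioi (1:ℝ), ENNReal.ofReal (K₀ * t ^ (-(1/θ))) := by
      apply setLIntegral_mono' measurableSet_Ioi
      intro t ht
      have ht1 : (1:ℝ) < t := ht
      refine (hsets t (by linarith)).trans ?_
      apply ENNReal.ofReal_le_ofReal
      have h1 : (1 + t) ^ (-(1/θ)) ≤ t ^ (-(1/θ)) :=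
        Real.rpow_le_rpow_of_nonpos (by linarith) (by linarith)
          (by rw [neg_nonpos]; positivity)
      nlinarith [h1, hK₀.le]
    refine step1.trans ?_
    rw [← ofReal_integral_eq_lintegral_ofReal hInt]
    · exact le_of_eq (congrArg _ hval)
    · filter_upwards [self_mem_ae_restrict measurableSet_Ioi] with t ht
      have : (1:ℝ) < t := ht
      positivity
  have htot : ∫⁻ x, ENNReal.ofReal (f x) ∂ν ≤ ENNReal.ofReal (1 + K₀ / (1 - θ)) := by
    rw [hlayer, hsplit, lintegral_union measurableSet_Ioi (Set.Ioc_disjoint_Ioi le_rfl)]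
    have h1θ : 0 < 1 - θ := by linarith
    have hle : K₀ * (θ / (1 - θ)) ≤ K₀ / (1 - θ) := by
      rw [mul_div_assoc']
      exact (div_le_div_iff_of_pos_right h1θ).2 (by nlinarith)
    calc (∫⁻ t in Ioc (0:ℝ) 1, ν {x | t ≤ f x}) + ∫⁻ t in Ioi 1, ν {x | t ≤ f x}
        ≤ 1 + ENNReal.ofReal (K₀ * (θ / (1 - θ))) := add_le_add hbound1 hbound2
      _ ≤ ENNReal.ofReal 1 + ENNReal.ofReal (K₀ / (1 - θ)) := by
          rw [ENNReal.ofReal_one]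
          exact add_le_add le_rfl (ENNReal.ofReal_le_ofReal hle)
      _ = ENNReal.ofReal (1 + K₀ / (1 - θ)) := by
          rw [ENNReal.ofReal_add (by norm_num) (by positivity)]
  have hfi : HasFiniteIntegral f ν := by
    rw [hasFiniteIntegral_iff_ofReal (Filter.Eventually.of_forall hf0)]
    exact lt_of_le_of_lt htot ENNReal.ofReal_lt_top
  have hfint : Integrable f ν := ⟨hfm.aestronglyMeasurable, hfi⟩
  have hint : Integrable (fun x => Real.exp (θ * Z x)) ν := by
    have : (fun x => Real.exp (θ * Z x)) = fun x => f x + 1 := by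
      funext x; simp [hf]
    rw [this]
    exact hfint.add (integrable_const 1)
  refine ⟨hint, ?_⟩
  have hIf : ∫ x, f x ∂ν ≤ 1 + K₀ / (1 - θ) := by
    have h1 : ENNReal.ofReal (∫ x, f x ∂ν) = ∫⁻ x, ENNReal.ofReal (f x) ∂ν :=
      ofReal_integral_eq_lintegral_ofReal hfint (Filter.Eventually.of_forall hf0)
    have h2 : ENNReal.ofReal (∫ x, f x ∂ν) ≤ ENNReal.ofReal (1 + K₀ / (1 - θ)) :=
      h1 ▸ htot
    exact (ENNReal.ofReal_le_ofReal_iff (by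
      have h1θ : (0:ℝ) < 1 - θ := by linarith
      positivity)).1 h2
  have : ∫ x, Real.exp (θ * Z x) ∂ν = (∫ x, f x ∂ν) + 1 := by
    have hrw : (fun x => Real.exp (θ * Z x)) = fun x => f x + 1 := by
      funext x; simp [hf]
    rw [hrw, integral_add hfint (integrable_const 1), integral_const]
    simp
  rw [this]
  linarith

section CondTail

variable {α C₁ C₂ B : ℝ} {μ : Measure ℝ}

lemma condS_measurable (α B : ℝ) : MeasurableSet {x : ℝ | B ^ (1/α) < |x|} :=
  measurableSet_lt measurable_const measurable_abs

lemma condS_lower (hα : 0 < α) (hα1 : α ≤ 1) (hC₁ : 0 < C₁) (hB : 1 ≤ B)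
    (hw : IsWeibull α C₁ C₂ μ) :
    ENNReal.ofReal (C₁ * Real.exp (-(B + 1)) / 2) ≤ μ {x : ℝ | B ^ (1/α) < |x|} := by
  have hB0 : (0:ℝ) ≤ B := by linarith
  have hBr : (0:ℝ) ≤ B ^ (1/α) := Real.rpow_nonneg hB0 _
  have hsub : {x : ℝ | B ^ (1/α) + 1 ≤ x} ⊆ {x : ℝ | B ^ (1/α) < |x|} := by
    intro x hx
    simp only [Set.mem_setOf_eq] at *
    have : B ^ (1/α) + 1 ≤ |x| := le_trans hx (le_abs_self x)
    linarith
  have ht1 : (1:ℝ) ≤ B ^ (1/α) + 1 := by linarith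
  have hwl := ((hw.2 (B ^ (1/α) + 1) ht1).1)
  refine le_trans ?_ (le_trans hwl (measure_mono hsub))
  apply ENNReal.ofReal_le_ofReal
  have hle : (B ^ (1/α) + 1) ^ α ≤ B + 1 := by
    have h1 : (B ^ (1/α) + 1) ^ α ≤ (B ^ (1/α)) ^ α + 1 ^ α :=
      rpow_add_le_add_rpow' hBr zero_le_one hα.le hα1
    have h2 : (B ^ (1/α)) ^ α = B := by
      rw [← Real.rpow_mul hB0, one_div_mul_cancel hα.ne', Real.rpow_one]
    rw [h2, Real.one_rpow] at h1
    exact h1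
  have := Real.exp_le_exp.2 (neg_le_neg hle)
  have h2C : (0:ℝ) ≤ C₁ := hC₁.le
  calc C₁ * Real.exp (-(B+1)) / 2 ≤ C₁ * Real.exp (-(B ^ (1/α) + 1) ^ α) / 2 := by
        apply div_le_div_of_nonneg_right ?_ (by norm_num : (0:ℝ) ≤ 2)
        exact mul_le_mul_of_nonneg_left this h2C
    _ = C₁ * Real.exp (-(B ^ (1/α) + 1) ^ α) / 2 := rfl

lemma condS_tail (hα : 0 < α) (hα1 : α ≤ 1) (hC₁ : 0 < C₁) (hC₂ : 0 < C₂) (hB : 1 ≤ B)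
    (hw : IsWeibull α C₁ C₂ μ) {s : ℝ} (hs : 0 < s) :
    μ[|{x : ℝ | B ^ (1/α) < |x|}] {x : ℝ | s ≤ max (|x| ^ α - B) 0}
      ≤ ENNReal.ofReal ((2 * C₂ * Real.exp 1 / C₁) * Real.exp (-s)) := by
  have hB0 : (0:ℝ) ≤ B := by linarith
  set S := {x : ℝ | B ^ (1/α) < |x|}
  have hSm : MeasurableSet S := condS_measurable α B
  set u := (B + s) ^ (1/α) with hu
  have hBs1 : (1:ℝ) ≤ B + s := by linarith
  have hu1 : (1:ℝ) ≤ u := Real.one_le_rpow hBs1 (by positivity)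
  have huα : u ^ α = B + s := by
    rw [hu, ← Real.rpow_mul (by linarith), one_div_mul_cancel hα.ne', Real.rpow_one]
  have hEsub : {x : ℝ | s ≤ max (|x| ^ α - B) 0} ⊆ {x : ℝ | u ≤ x} ∪ {x : ℝ | x ≤ -u} := by
    intro x hx
    simp only [Set.mem_setOf_eq] at hx
    have hx' : B + s ≤ |x| ^ α := by
      rcases le_or_gt (|x| ^ α - B) 0 with h | h
      · rw [max_eq_right h] at hx; linarith
      · rw [max_eq_left h.le] at hx; linarith
    have hxu : u ≤ |x| := by
      have h1 : (B + s) ^ (1/α) ≤ (|x| ^ α) ^ (1/α) :=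
        Real.rpow_le_rpow (by linarith) hx' (by positivity)
      rwa [← Real.rpow_mul (abs_nonneg x), mul_one_div_cancel hα.ne', Real.rpow_one] at h1
    rcases le_or_gt 0 x with h | h
    · left; simp only [Set.mem_setOf_eq]; rwa [abs_of_nonneg h] at hxu
    · right; simp only [Set.mem_setOf_eq]; rw [abs_of_neg h] at hxu; linarith
  have hwu := hw.2 u hu1
  have hEbound : μ {x : ℝ | s ≤ max (|x| ^ α - B) 0} ≤ ENNReal.ofReal (C₂ * Real.exp (-(B+s))) := by
    refine le_trans (measure_mono hEsub) (le_trans (measure_union_le _ _) ?_)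
    have h1 := hwu.2.1
    have h2 := hwu.2.2.2
    rw [huα] at h1 h2
    calc μ {x : ℝ | u ≤ x} + μ {x : ℝ | x ≤ -u}
        ≤ ENNReal.ofReal (C₂ * Real.exp (-(B+s)) / 2) + ENNReal.ofReal (C₂ * Real.exp (-(B+s)) / 2) :=
          add_le_add h1 h2
      _ = ENNReal.ofReal (C₂ * Real.exp (-(B+s))) := by
          rw [← ENNReal.ofReal_add (by positivity) (by positivity)]
          congr 1; ring
  set D := C₁ * Real.exp (-(B + 1)) / 2 with hD
  have hDpos : 0 < D := by positivity
  have hSlow : ENNReal.ofReal D ≤ μ S := condS_lower hα hα1 hC₁ hB hw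
  rw [cond_apply hSm]
  calc (μ S)⁻¹ * μ (S ∩ {x : ℝ | s ≤ max (|x| ^ α - B) 0})
      ≤ (ENNReal.ofReal D)⁻¹ * ENNReal.ofReal (C₂ * Real.exp (-(B+s))) := by
        apply mul_le_mul'
        · exact ENNReal.inv_le_inv' hSlow
        · exact le_trans (measure_mono Set.inter_subset_right) hEbound
    _ = ENNReal.ofReal (D⁻¹ * (C₂ * Real.exp (-(B+s)))) := by
        rw [← ENNReal.ofReal_inv_of_pos hDpos, ← ENNReal.ofReal_mul (by positivity)]
    _ ≤ ENNReal.ofReal ((2 * C₂ * Real.exp 1 / C₁) * Real.exp (-s)) := by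
        apply ENNReal.ofReal_le_ofReal
        rw [hD]
        rw [show (C₁ * Real.exp (-(B + 1)) / 2)⁻¹ = 2 * Real.exp (B+1) / C₁ by
          rw [show Real.exp (-(B+1)) = (Real.exp (B+1))⁻¹ from Real.exp_neg _]
          field_simp]
        rw [show Real.exp (B+1) = Real.exp B * Real.exp 1 by rw [← Real.exp_add]]
        rw [show Real.exp (-(B+s)) = Real.exp (-B) * Real.exp (-s) by rw [← Real.exp_add]; ring_nf]
        have : Real.exp B * Real.exp (-B) = 1 := by rw [← Real.exp_add]; simp
        apply le_of_eq
        calc 2 * (Real.exp B * Real.exp 1) / C₁ * (C₂ * (Real.exp (-B) * Real.exp (-s)))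
            = (2 * C₂ * Real.exp 1 / C₁) * Real.exp (-s) * (Real.exp B * Real.exp (-B)) := by ring
          _ = (2 * C₂ * Real.exp 1 / C₁) * Real.exp (-s) * 1 := by rw [this]
          _ = (2 * C₂ * Real.exp 1 / C₁) * Real.exp (-s) := mul_one _


lemma condS_ne_zero (hα : 0 < α) (hα1 : α ≤ 1) (hC₁ : 0 < C₁) (hB : 1 ≤ B)
    (hw : IsWeibull α C₁ C₂ μ) : μ {x : ℝ | B ^ (1/α) < |x|} ≠ 0 := by
  have h := condS_lower hα hα1 hC₁ hB hw (C₂ := C₂)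
  intro h0
  rw [h0] at h
  simp only [nonpos_iff_eq_zero, ENNReal.ofReal_eq_zero] at h
  have : (0:ℝ) < C₁ * Real.exp (-(B + 1)) / 2 := by positivity
  linarith

end CondTail

section Edges

variable {m : ℕ} (G : SimpleGraph (Fin m)) [DecidableRel G.Adj]

abbrev EdgeIdx := {p : Fin m × Fin m // p.1 < p.2 ∧ G.Adj p.1 p.2}

def nbrs (i : Fin m) : Finset (Fin m) := Finset.univ.filter (fun j => G.Adj i j)

def edgeOf (i : Fin m) (j : {x // x ∈ nbrs G i}) : EdgeIdx G := by
  have hadj : G.Adj i (j : Fin m) := (Finset.mem_filter.1 j.2).2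
  exact if hij : i < (j : Fin m) then ⟨(i, (j : Fin m)), hij, hadj⟩
    else ⟨((j : Fin m), i),
      lt_of_le_of_ne (le_of_not_gt hij) ((G.ne_of_adj hadj).symm), hadj.symm⟩

def edgesAt (i : Fin m) : Finset (EdgeIdx G) := (nbrs G i).attach.image (edgeOf G i)

lemma edgeOf_injective (i : Fin m) : Function.Injective (edgeOf G i) := by
  intro j₁ j₂ h
  apply Subtype.ext
  have hadj₁ : G.Adj i (j₁ : Fin m) := (Finset.mem_filter.1 j₁.2).2
  have hadj₂ : G.Adj i (j₂ : Fin m) := (Finset.mem_filter.1 j₂.2).2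
  unfold edgeOf at h
  by_cases h₁ : i < (j₁ : Fin m) <;> by_cases h₂ : i < (j₂ : Fin m)
  · simp only [h₁, h₂, dite_true, Subtype.mk.injEq, Prod.mk.injEq, true_and] at h
    exact h
  · simp only [h₁, h₂, dite_true, dite_false, Subtype.mk.injEq, Prod.mk.injEq] at h
    exfalso
    rw [h.2] at h₁
    exact lt_irrefl i h₁
  · simp only [h₁, h₂, dite_true, dite_false, Subtype.mk.injEq, Prod.mk.injEq] at h
    exfalso
    rw [← h.2] at h₂
    exact lt_irrefl i h₂
  · simp only [h₁, h₂, dite_false, Subtype.mk.injEq, Prod.mk.injEq, and_true] at h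
    exact h

lemma edgesAt_card_le {d : ℕ} (hdeg : MaxDegLE G d) (i : Fin m) :
    (edgesAt G i).card ≤ d := by
  have h1 : (edgesAt G i).card ≤ (nbrs G i).attach.card := Finset.card_image_le
  have h2 : (nbrs G i).attach.card = (nbrs G i).card := Finset.card_attach
  have h3 : {w | G.Adj i w}.ncard = (nbrs G i).card := by
    have : {w | G.Adj i w} = ↑(nbrs G i) := by
      ext w; simp [nbrs]
    rw [this, Set.ncard_coe_finset]
  have := hdeg i
  omega

lemma vertex_sum_bound {d : ℕ} (hdeg : MaxDegLE G d) (W : Fin m → Fin m → ℝ)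
    (hsymm : ∀ i j, W i j = W j i) {α B t : ℝ} (hα : 0 < α) (hα1 : α ≤ 1)
    (hB : 0 ≤ B) (ht : 0 < t) (h : t ≤ lam1 (weightedAdj G W)) :
    ∃ i : Fin m, t ^ α - d * B ≤
      ∑ e ∈ edgesAt G i, max (|W (e : EdgeIdx G).1.1 (e : EdgeIdx G).1.2| ^ α - B) 0 := by
  obtain ⟨i, hi⟩ := eigen_row_bound _ ht h
  refine ⟨i, ?_⟩
  have hrow : ∑ j, |weightedAdj G W i j| = ∑ j ∈ nbrs G i, |W i j| := by
    rw [nbrs, Finset.sum_filter]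
    apply Finset.sum_congr rfl
    intro j _
    by_cases hadj : G.Adj i j <;> simp [weightedAdj, hadj]
  rw [hrow] at hi
  have h1 : t ^ α ≤ (∑ j ∈ nbrs G i, |W i j|) ^ α := Real.rpow_le_rpow ht.le hi hα.le
  have h2 : (∑ j ∈ nbrs G i, |W i j|) ^ α ≤ ∑ j ∈ nbrs G i, |W i j| ^ α :=
    rpow_sum_le_sum_rpow _ _ (fun j _ => abs_nonneg _) hα hα1
  have h3 : ∑ j ∈ nbrs G i, |W i j| ^ α ≤ (∑ j ∈ nbrs G i, max (|W i j| ^ α - B) 0) +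
      (nbrs G i).card * B := by
    have this : ∀ j ∈ nbrs G i, |W i j| ^ α ≤ max (|W i j| ^ α - B) 0 + B := by
      intro j _
      rcases le_total (|W i j| ^ α - B) 0 with hc | hc
      · rw [max_eq_right hc]; linarith
      · rw [max_eq_left hc]; linarith
    calc ∑ j ∈ nbrs G i, |W i j| ^ α ≤ ∑ j ∈ nbrs G i, (max (|W i j| ^ α - B) 0 + B) :=
          Finset.sum_le_sum this
      _ = (∑ j ∈ nbrs G i, max (|W i j| ^ α - B) 0) + (nbrs G i).card * B := by
          rw [Finset.sum_add_distrib, Finset.sum_const, nsmul_eq_mul]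
  have hcard : ((nbrs G i).card : ℝ) * B ≤ d * B := by
    apply mul_le_mul_of_nonneg_right _ hB
    exact_mod_cast (by
      have h1 : (nbrs G i).card = {w | G.Adj i w}.ncard := by
        have : {w | G.Adj i w} = ↑(nbrs G i) := by ext w; simp [nbrs]
        rw [this, Set.ncard_coe_finset]
      rw [h1]; exact_mod_cast hdeg i : ((nbrs G i).card : ℝ) ≤ d)
  have hsum : ∑ j ∈ nbrs G i, max (|W i j| ^ α - B) 0 =
      ∑ e ∈ edgesAt G i, max (|W (e : EdgeIdx G).1.1 (e : EdgeIdx G).1.2| ^ α - B) 0 := by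
    rw [edgesAt, Finset.sum_image (fun a _ b _ hab => edgeOf_injective G i hab)]
    rw [← Finset.sum_attach (nbrs G i) (fun j => max (|W i j| ^ α - B) 0)]
    apply Finset.sum_congr rfl
    intro j _
    have hadj : G.Adj i (j : Fin m) := (Finset.mem_filter.1 j.2).2
    unfold edgeOf
    by_cases hij : i < (j : Fin m)
    · simp [hij]
    · simp only [hij, dite_false]
      rw [hsymm]
  rw [← hsum]
  linarith

end Edges

lemma vertex_chernoff {m d : ℕ} (G : SimpleGraph (Fin m)) [DecidableRel G.Adj]
    {Ω : Type*} [MeasurableSpace Ω] (P : Measure Ω) [IsProbabilityMeasure P]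
    (Y : Ω → Fin m → Fin m → ℝ) (hYmeas : Measurable Y)
    (ν : Measure ℝ) [IsProbabilityMeasure ν]
    (hlaw : ∀ i j : Fin m, G.Adj i j → Measure.map (fun ω => Y ω i j) P = ν)
    (hindep : iIndepFun
      (fun (e : EdgeIdx G) (ω : Ω) => Y ω e.1.1 e.1.2) P)
    {Z : ℝ → ℝ} (hZm : Measurable Z)
    {θ Mb : ℝ} (hθ0 : 0 < θ) (hMb : 1 ≤ Mb)
    (hint : Integrable (fun x => Real.exp (θ * Z x)) ν)
    (hmgf : ∫ x, Real.exp (θ * Z x) ∂ν ≤ Mb)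
    (hcard : ∀ i, (edgesAt G i).card ≤ d)
    (s : ℝ) (i : Fin m) :
    P {ω | s ≤ ∑ e ∈ edgesAt G i, Z (Y ω (e : EdgeIdx G).1.1 (e : EdgeIdx G).1.2)}
      ≤ ENNReal.ofReal (Real.exp (-θ * s) * Mb ^ d) := by
  set X : EdgeIdx G → Ω → ℝ := fun e ω => Z (Y ω e.1.1 e.1.2) with hX
  have hYe : ∀ e : EdgeIdx G, Measurable (fun ω => Y ω (e : EdgeIdx G).1.1 (e : EdgeIdx G).1.2) :=
    fun e => (measurable_pi_apply _).comp ((measurable_pi_apply _).comp hYmeas)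
  have hXmeas : ∀ e, Measurable (X e) := fun e => hZm.comp (hYe e)
  have hindep' : iIndepFun X P :=
    hindep.comp (fun _ => Z) (fun _ => hZm)
  have hintX : ∀ e ∈ edgesAt G i, Integrable (fun ω => Real.exp (θ * X e ω)) P := by
    intro e _
    have hmapν := hlaw e.1.1 e.1.2 e.2.2
    have : Integrable (fun x => Real.exp (θ * Z x)) (Measure.map (fun ω => Y ω e.1.1 e.1.2) P) := by
      rw [hmapν]; exact hint
    exact (integrable_map_measure (((hZm.const_mul θ).exp).aestronglyMeasurable)
      (hYe e).aemeasurable).1 this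
  have hintSum : Integrable (fun ω => Real.exp (θ * (∑ e ∈ edgesAt G i, X e) ω)) P :=
    hindep'.integrable_exp_mul_sum hXmeas hintX
  have hchern := measure_ge_le_exp_mul_mgf (μ := P) (X := ∑ e ∈ edgesAt G i, X e) s hθ0.le hintSum
  have hmgfsum : mgf (∑ e ∈ edgesAt G i, X e) P θ = ∏ e ∈ edgesAt G i, mgf (X e) P θ :=
    hindep'.mgf_sum hXmeas _
  have hmgfX : ∀ e : EdgeIdx G, mgf (X e) P θ = ∫ x, Real.exp (θ * Z x) ∂ν := by
    intro e
    rw [mgf, ← hlaw e.1.1 e.1.2 e.2.2,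
      integral_map (hYe e).aemeasurable (((hZm.const_mul θ).exp).aestronglyMeasurable)]
  have hprod : ∏ e ∈ edgesAt G i, mgf (X e) P θ ≤ Mb ^ d := by
    have h1 : ∏ e ∈ edgesAt G i, mgf (X e) P θ ≤ ∏ _e ∈ edgesAt G i, Mb :=
      Finset.prod_le_prod (fun e _ => mgf_nonneg) (fun e _ => (hmgfX e) ▸ hmgf)
    rw [Finset.prod_const] at h1
    exact h1.trans (pow_le_pow_right₀ (by linarith) (hcard i))
  have hset : {ω | s ≤ ∑ e ∈ edgesAt G i, Z (Y ω (e : EdgeIdx G).1.1 (e : EdgeIdx G).1.2)}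
      = {ω | s ≤ (∑ e ∈ edgesAt G i, X e) ω} := by
    ext ω; simp [hX, Finset.sum_apply]
  rw [hset]
  have hne : P {ω | s ≤ (∑ e ∈ edgesAt G i, X e) ω} ≠ ⊤ := measure_ne_top _ _
  rw [← ENNReal.ofReal_toReal hne]
  apply ENNReal.ofReal_le_ofReal
  refine hchern.trans ?_
  rw [hmgfsum]
  have hexp : (0:ℝ) ≤ Real.exp (-θ * s) := (Real.exp_pos _).le
  exact mul_le_mul_of_nonneg_left hprod hexp

lemma log_le_four_rpow {x : ℝ} (hx : 1 ≤ x) : Real.log x ≤ 4 * x ^ ((1:ℝ)/4) := by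
  have hx0 : 0 < x := by linarith
  have h1 : Real.log (x ^ ((1:ℝ)/4)) = (1/4) * Real.log x := Real.log_rpow hx0 _
  have h2 : Real.log (x ^ ((1:ℝ)/4)) ≤ x ^ ((1:ℝ)/4) - 1 :=
    Real.log_le_sub_one_of_pos (Real.rpow_pos_of_pos hx0 _)
  nlinarith [Real.rpow_pos_of_pos hx0 ((1:ℝ)/4)]

lemma log_terms_small (c K₀ : ℝ) (hc : 0 < c) (hK₀ : 0 < K₀) (d : ℕ) {γ : ℝ} (hγ : 0 < γ) :
    Tendsto (fun x : ℝ => γ * x ^ ((1:ℝ)/2) -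
      (Real.log (c*x) + d * Real.log (2 + K₀*x) + 1)) atTop atTop := by
  set C₅ : ℝ := |Real.log c| + d * Real.log (2 + K₀) + 1 with hC₅
  set C₆ : ℝ := 4 * (1 + d) with hC₆
  have hmain : Tendsto (fun x : ℝ => x ^ ((1:ℝ)/4) * (γ * x ^ ((1:ℝ)/4) - C₆) - C₅)
      atTop atTop := by
    apply tendsto_atTop_add_const_right
    apply Filter.Tendsto.atTop_mul_atTop₀ (tendsto_rpow_atTop (by norm_num))
    apply tendsto_atTop_add_const_right
    exact (tendsto_rpow_atTop (by norm_num)).const_mul_atTop hγ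
  apply tendsto_atTop_mono' _ _ hmain
  filter_upwards [eventually_ge_atTop (1:ℝ)] with x hx1
  have hx0 : 0 < x := by linarith
  have hlogx : Real.log x ≤ 4 * x ^ ((1:ℝ)/4) := log_le_four_rpow hx1
  have hlog1 : Real.log (c*x) ≤ |Real.log c| + 4 * x ^ ((1:ℝ)/4) := by
    rw [Real.log_mul hc.ne' hx0.ne']
    have := le_abs_self (Real.log c)
    linarith
  have hlog2 : Real.log (2 + K₀*x) ≤ Real.log (2 + K₀) + 4 * x ^ ((1:ℝ)/4) := by
    have h1 : 2 + K₀*x ≤ (2 + K₀)*x := by nlinarith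
    have h2 : Real.log (2 + K₀*x) ≤ Real.log ((2 + K₀)*x) :=
      Real.log_le_log (by positivity) h1
    rw [Real.log_mul (by positivity) hx0.ne'] at h2
    linarith
  have hsq : x ^ ((1:ℝ)/2) = x ^ ((1:ℝ)/4) * x ^ ((1:ℝ)/4) := by
    rw [← Real.rpow_add hx0]; norm_num
  have hd0 : (0:ℝ) ≤ (d:ℝ) := Nat.cast_nonneg d
  have h3 : (d:ℝ) * Real.log (2 + K₀*x) ≤ (d:ℝ) * (Real.log (2 + K₀) + 4 * x ^ ((1:ℝ)/4)) :=
    mul_le_mul_of_nonneg_left hlog2 hd0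
  have hgoal : x ^ ((1:ℝ)/4) * (γ * x ^ ((1:ℝ)/4) - C₆) - C₅ ≤
      γ * x ^ ((1:ℝ)/2) - (Real.log (c*x) + d * Real.log (2 + K₀*x) + 1) := by
    rw [hsq]
    have hxp : (0:ℝ) ≤ x ^ ((1:ℝ)/4) := (Real.rpow_pos_of_pos hx0 _).le
    nlinarith [h3, hlog1, hxp]
  exact hgoal

lemma one_le_rpow' {x z : ℝ} (hx : 1 ≤ x) (hz : 0 ≤ z) : 1 ≤ x ^ z := by
  calc (1:ℝ) = x ^ (0:ℝ) := (Real.rpow_zero x).symm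
    _ ≤ x ^ z := Real.rpow_le_rpow_of_exponent_le hx hz

lemma E_tendsto (α c K₀ : ℝ) (hα : 0 < α) (hα1 : α ≤ 1) (hc : 0 < c) (hK₀ : 0 < K₀) (d : ℕ)
    (b a : ℕ → ℝ) (hbpos : ∀ n, 0 < b n) (hapos : ∀ n, 0 < a n)
    (hbtop : Tendsto (fun n => b n / Real.log (Real.log n)) atTop atTop)
    (hbO : ∃ K : ℝ, ∀ᶠ n in atTop, b n ≤ K * Real.log n)
    (hatop : Tendsto (fun n => a n / (b n ^ (α/2) * Real.log n ^ (1 - α/2))) atTop atTop) :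
    Tendsto (fun n : ℕ => Real.log n + Real.log (c * Real.log n)
      + d * Real.log (2 + K₀ * Real.log n)
      - (1 - 1/Real.log n) * ((Real.log n ^ (1/α) + a n ^ (1/α)) ^ α - d * b n))
      atTop atBot := by
  obtain ⟨K, hK⟩ := hbO
  set K' : ℝ := max K 1 with hK'def
  have hK'1 : (1:ℝ) ≤ K' := le_max_right _ _
  have hK'0 : (0:ℝ) < K' := lt_of_lt_of_le one_pos hK'1
  set L : ℕ → ℝ := fun n => Real.log n with hLdef
  have hL : Tendsto L atTop atTop :=
    Real.tendsto_log_atTop.comp tendsto_natCast_atTop_atTop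
  have hLL : Tendsto (fun n : ℕ => Real.log (L n)) atTop atTop :=
    Real.tendsto_log_atTop.comp hL
  have hbK' : ∀ᶠ n in atTop, b n ≤ K' * L n := by
    filter_upwards [hK, hL.eventually_ge_atTop 0] with n h1 h2
    calc b n ≤ K * L n := h1
      _ ≤ K' * L n := mul_le_mul_of_nonneg_right (le_max_left _ _) h2
  have hb1 : ∀ᶠ n in atTop, 1 ≤ b n := by
    filter_upwards [hbtop.eventually_ge_atTop 1, hLL.eventually_ge_atTop 1] with n h1 h2
    have h3 : 0 < Real.log (Real.log n) := by
      have : Real.log (L n) = Real.log (Real.log n) := rfl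
      linarith [h2, this ▸ h2]
    rw [le_div_iff₀ h3] at h1
    rw [one_mul] at h1
    have h2' : 1 ≤ Real.log (Real.log n) := by
      have : Real.log (L n) = Real.log (Real.log n) := rfl
      linarith [this ▸ h2]
    linarith
  set c₁ : ℝ := α / (1 + 2 ^ ((1:ℝ)/α)) with hc₁def
  have h2α : (0:ℝ) < 2 ^ ((1:ℝ)/α) := Real.rpow_pos_of_pos two_pos _
  have hc₁ : 0 < c₁ := div_pos hα (by linarith)
  set γ : ℝ := min (c₁/4) (1/8) with hγdef
  have hγ : 0 < γ := lt_min (by positivity) (by norm_num)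
  set ωf : ℕ → ℝ := fun n => a n / (b n ^ (α/2) * L n ^ (1 - α/2)) with hωdef
  set ωbd : ℝ := max 1 (max (2*d*K'^((1:ℝ)/2)/c₁) (8*d*K')) with hωbd
  have hωev : ∀ᶠ n in atTop, ωbd ≤ ωf n := hatop.eventually_ge_atTop ωbd
  have hLev : ∀ᶠ n in atTop, max 4 ((4*K'/c₁)^2) ≤ L n := hL.eventually_ge_atTop _
  have hα' : (1:ℝ) ≤ 1/α := by rw [le_div_iff₀ hα]; linarith
  -- the dominating sequence
  have hdom : Tendsto (fun n : ℕ => -(γ * (L n) ^ ((1:ℝ)/2) -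
      (Real.log (c * L n) + d * Real.log (2 + K₀ * L n) + 1))) atTop atBot := by
    have := (log_terms_small c K₀ hc hK₀ d hγ).comp hL
    exact tendsto_neg_atTop_atBot.comp this
  apply tendsto_atBot_mono' atTop _ hdom
  filter_upwards [hb1, hbK', hωev, hLev] with n hB1 hBK hω hLn
  set A := a n with hA
  set B := b n with hB
  set Lr := L n with hLr
  have hLr4 : (4:ℝ) ≤ Lr := le_trans (le_max_left _ _) hLn
  have hLrK : (4*K'/c₁)^2 ≤ Lr := le_trans (le_max_right _ _) hLn
  have hLr1 : (1:ℝ) ≤ Lr := by linarith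
  have hLr0 : (0:ℝ) < Lr := by linarith
  have hApos : 0 < A := hapos n
  have hBpos : 0 < B := hbpos n
  have hω1 : (1:ℝ) ≤ ωf n := le_trans (le_max_left _ _) hω
  have hω2 : 2*d*K'^((1:ℝ)/2)/c₁ ≤ ωf n := le_trans (le_trans (le_max_left _ _) (le_max_right _ _)) hω
  have hω3 : 8*d*K' ≤ ωf n := le_trans (le_trans (le_max_right _ _) (le_max_right _ _)) hω
  set w := ωf n with hw
  have hD : 0 < B ^ (α/2) * Lr ^ (1 - α/2) := by positivity
  have hAeq : A = w * (B ^ (α/2) * Lr ^ (1 - α/2)) := by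
    rw [hw, hωdef]
    exact (div_mul_cancel₀ _ hD.ne').symm
  -- basic rpow quantities
  set x := Lr ^ ((1:ℝ)/α) with hx
  set y := A ^ ((1:ℝ)/α) with hy
  have hxpos : 0 < x := Real.rpow_pos_of_pos hLr0 _
  have hypos : 0 < y := Real.rpow_pos_of_pos hApos _
  have htpos : 0 < x + y := by linarith
  have hxα : x ^ α = Lr := by
    rw [hx, ← Real.rpow_mul hLr0.le, one_div_mul_cancel hα.ne', Real.rpow_one]
  have hyα : y ^ α = A := by
    rw [hy, ← Real.rpow_mul hApos.le, one_div_mul_cancel hα.ne', Real.rpow_one]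
  set W := (x + y) ^ α with hW
  have hWpos : 0 < W := Real.rpow_pos_of_pos htpos _
  have hWgeL : Lr ≤ W := by
    rw [← hxα, hW]
    exact Real.rpow_le_rpow hxpos.le (by linarith) hα.le
  have hWgeA : A ≤ W := by
    rw [← hyα, hW]
    exact Real.rpow_le_rpow hypos.le (by linarith) hα.le
  have hWle : W ≤ Lr + A := by
    rw [hW, ← hxα, ← hyα]
    exact rpow_add_le_add_rpow' hxpos.le hypos.le hα.le hα1
  -- Bernoulli lower bound : W ≥ Lr + α * Lr * (y/(x+y))
  have hbern : Lr + α * Lr * (y/(x+y)) ≤ W := by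
    have hyt1 : y/(x+y) ≤ 1 := by
      rw [div_le_one htpos]; linarith
    have hyt0 : 0 < y/(x+y) := div_pos hypos htpos
    have hbernoulli : (1 + (-(y/(x+y)))) ^ α ≤ 1 + α * (-(y/(x+y))) :=
      rpow_one_add_le_one_add_mul_self (by linarith) hα.le hα1
    have hxt : x = (x+y) * (1 - y/(x+y)) := by field_simp; ring
    have hLface : Lr = W * (1 - y/(x+y)) ^ α := by
      conv_lhs => rw [← hxα, hxt]
      rw [Real.mul_rpow htpos.le (by linarith)]
    have h1 : (1 - y/(x+y)) ^ α ≤ 1 - α * (y/(x+y)) := by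
      have : 1 + (-(y/(x+y))) = 1 - y/(x+y) := by ring
      rw [this] at hbernoulli
      linarith
    have h2 : Lr ≤ W * (1 - α * (y/(x+y))) := by
      rw [hLface]
      exact mul_le_mul_of_nonneg_left h1 hWpos.le
    have hαyt : 0 ≤ α * (y/(x+y)) := by positivity
    have h3 : Lr * (α * (y/(x+y))) ≤ W * (α * (y/(x+y))) :=
      mul_le_mul_of_nonneg_right hWgeL hαyt
    linarith [h2, h3]
  -- the key lower bound on W via case analysis
  set φ : ℝ := min (c₁ * (y * Lr ^ (1 - 1/α))) (A/2) with hφ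
  have hstep1 : Lr + φ ≤ W := by
    rcases le_or_gt A (2*Lr) with hcase | hcase
    · -- A ≤ 2 Lr
      have hy2x : y ≤ 2 ^ ((1:ℝ)/α) * x := by
        rw [hy, hx]
        calc A ^ ((1:ℝ)/α) ≤ (2*Lr) ^ ((1:ℝ)/α) :=
              Real.rpow_le_rpow hApos.le hcase (by positivity)
          _ = 2 ^ ((1:ℝ)/α) * Lr ^ ((1:ℝ)/α) := Real.mul_rpow (by norm_num) hLr0.le
      have ht2 : x + y ≤ (1 + 2 ^ ((1:ℝ)/α)) * x := by linarith [hy2x]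
      have hdiv : α * Lr * (y/((1 + 2 ^ ((1:ℝ)/α)) * x)) ≤ α * Lr * (y/(x+y)) := by
        apply mul_le_mul_of_nonneg_left _ (by positivity)
        exact div_le_div_of_nonneg_left hypos.le htpos ht2
      have hid : α * Lr * (y/((1 + 2 ^ ((1:ℝ)/α)) * x)) = c₁ * (y * (Lr / x)) := by
        rw [hc₁def]; field_simp
      have hLrx : Lr / x = Lr ^ (1 - 1/α) := by
        rw [hx, Real.rpow_sub hLr0, Real.rpow_one]
      have harm : c₁ * (y * Lr ^ (1 - 1/α)) ≤ α * Lr * (y/(x+y)) := by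
        rw [← hLrx, ← hid]; exact hdiv
      have : φ ≤ c₁ * (y * Lr ^ (1 - 1/α)) := min_le_left _ _
      linarith [hbern]
    · -- 2 Lr < A
      have : φ ≤ A/2 := min_le_right _ _
      linarith [hWgeA]
  -- lower bound on φ
  have hsB1 : (1:ℝ) ≤ B ^ ((1:ℝ)/2) := one_le_rpow' hB1 (by norm_num)
  have hsL1 : (1:ℝ) ≤ Lr ^ ((1:ℝ)/2) := one_le_rpow' hLr1 (by norm_num)
  have hsLK : 4*K'/c₁ ≤ Lr ^ ((1:ℝ)/2) := by
    have h0 : (0:ℝ) ≤ 4*K'/c₁ := by positivity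
    calc 4*K'/c₁ = ((4*K'/c₁)^2) ^ ((1:ℝ)/2) := by
          rw [← Real.rpow_natCast (4*K'/c₁) 2, ← Real.rpow_mul h0]
          norm_num
      _ ≤ Lr ^ ((1:ℝ)/2) := Real.rpow_le_rpow (by positivity) hLrK (by norm_num)
  have hsB : B ^ ((1:ℝ)/2) ≤ K' ^ ((1:ℝ)/2) * Lr ^ ((1:ℝ)/2) := by
    calc B ^ ((1:ℝ)/2) ≤ (K' * Lr) ^ ((1:ℝ)/2) :=
          Real.rpow_le_rpow hBpos.le hBK (by norm_num)
      _ = K' ^ ((1:ℝ)/2) * Lr ^ ((1:ℝ)/2) := Real.mul_rpow hK'0.le hLr0.le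
  have hBsq : B = B ^ ((1:ℝ)/2) * B ^ ((1:ℝ)/2) := by
    rw [← Real.rpow_add hBpos]; norm_num
  have hf3 : B ≤ K' ^ ((1:ℝ)/2) * (B ^ ((1:ℝ)/2) * Lr ^ ((1:ℝ)/2)) := by
    calc B = B ^ ((1:ℝ)/2) * B ^ ((1:ℝ)/2) := hBsq
      _ ≤ (K' ^ ((1:ℝ)/2) * Lr ^ ((1:ℝ)/2)) * B ^ ((1:ℝ)/2) := by
          apply mul_le_mul_of_nonneg_right hsB (by positivity)
      _ = K' ^ ((1:ℝ)/2) * (B ^ ((1:ℝ)/2) * Lr ^ ((1:ℝ)/2)) := by ring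
  have hf1 : y * Lr ^ (1 - 1/α) = w ^ ((1:ℝ)/α) * (B ^ ((1:ℝ)/2) * Lr ^ ((1:ℝ)/2)) := by
    have hwpos : 0 < w := lt_of_lt_of_le one_pos hω1
    have e1 : y = w ^ ((1:ℝ)/α) * (B ^ ((α/2) * (1/α)) * Lr ^ ((1 - α/2) * (1/α))) := by
      rw [hy, hAeq, Real.mul_rpow hwpos.le hD.le,
        Real.mul_rpow (by positivity) (by positivity),
        ← Real.rpow_mul hBpos.le, ← Real.rpow_mul hLr0.le]
    have e2 : (α/2) * (1/α) = (1:ℝ)/2 := by field_simp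
    have e3 : Lr ^ ((1 - α/2) * (1/α)) * Lr ^ (1 - 1/α) = Lr ^ ((1:ℝ)/2) := by
      rw [← Real.rpow_add hLr0]
      congr 1
      field_simp
      ring
    rw [e1, e2]
    calc w ^ ((1:ℝ)/α) * (B ^ ((1:ℝ)/2) * Lr ^ ((1 - α/2) * (1/α))) * Lr ^ (1 - 1/α)
        = w ^ ((1:ℝ)/α) * (B ^ ((1:ℝ)/2) * (Lr ^ ((1 - α/2) * (1/α)) * Lr ^ (1 - 1/α))) := by
          ring
      _ = w ^ ((1:ℝ)/α) * (B ^ ((1:ℝ)/2) * Lr ^ ((1:ℝ)/2)) := by rw [e3]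
  have hf2 : w ≤ w ^ ((1:ℝ)/α) := by
    calc w = w ^ (1:ℝ) := (Real.rpow_one w).symm
      _ ≤ w ^ ((1:ℝ)/α) := Real.rpow_le_rpow_of_exponent_le hω1 hα'
  have hf4 : A / Lr ≤ w * K' := by
    have h1 : B ^ (α/2) ≤ K' ^ (α/2) * Lr ^ (α/2) := by
      calc B ^ (α/2) ≤ (K' * Lr) ^ (α/2) := Real.rpow_le_rpow hBpos.le hBK (by positivity)
        _ = K' ^ (α/2) * Lr ^ (α/2) := Real.mul_rpow hK'0.le hLr0.le
    have h2 : A ≤ w * K' ^ (α/2) * Lr := by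
      calc A = w * (B ^ (α/2) * Lr ^ (1 - α/2)) := hAeq
        _ ≤ w * ((K' ^ (α/2) * Lr ^ (α/2)) * Lr ^ (1 - α/2)) := by
            apply mul_le_mul_of_nonneg_left _ (by linarith)
            apply mul_le_mul_of_nonneg_right h1 (by positivity)
        _ = w * K' ^ (α/2) * (Lr ^ (α/2) * Lr ^ (1 - α/2)) := by ring
        _ = w * K' ^ (α/2) * Lr := by
            rw [← Real.rpow_add hLr0]
            norm_num
    have h3 : K' ^ (α/2) ≤ K' := by
      calc K' ^ (α/2) ≤ K' ^ (1:ℝ) := Real.rpow_le_rpow_of_exponent_le hK'1 (by linarith)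
        _ = K' := Real.rpow_one K'
    rw [div_le_iff₀ hLr0]
    calc A ≤ w * K' ^ (α/2) * Lr := h2
      _ ≤ w * K' * Lr := by
          apply mul_le_mul_of_nonneg_right _ hLr0.le
          apply mul_le_mul_of_nonneg_left h3 (by linarith)
  have hf5 : w * Lr ^ ((1:ℝ)/2) ≤ A := by
    have h1 : Lr ^ ((1:ℝ)/2) ≤ Lr ^ (1 - α/2) :=
      Real.rpow_le_rpow_of_exponent_le hLr1 (by linarith)
    have h2 : (1:ℝ) ≤ B ^ (α/2) := one_le_rpow' hB1 (by positivity)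
    calc w * Lr ^ ((1:ℝ)/2) ≤ w * (B ^ (α/2) * Lr ^ (1 - α/2)) := by
          apply mul_le_mul_of_nonneg_left _ (by linarith)
          calc Lr ^ ((1:ℝ)/2) = 1 * Lr ^ ((1:ℝ)/2) := (one_mul _).symm
            _ ≤ B ^ (α/2) * Lr ^ (1 - α/2) := by
                apply mul_le_mul h2 h1 (by positivity) (by positivity)
      _ = A := hAeq.symm
  have hf6 : (w / K') * B ≤ A := by
    have h1 : B / K' ≤ Lr := by
      rw [div_le_iff₀ hK'0]
      calc B ≤ K' * Lr := hBK
        _ = Lr * K' := by ring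
    have h2 : (B/K') ^ (1 - α/2) ≤ Lr ^ (1 - α/2) :=
      Real.rpow_le_rpow (by positivity) h1 (by linarith)
    have h3 : (B/K') ^ (1 - α/2) = B ^ (1 - α/2) / K' ^ (1 - α/2) :=
      Real.div_rpow hBpos.le hK'0.le _
    have h4 : K' ^ (1 - α/2) ≤ K' := by
      calc K' ^ (1 - α/2) ≤ K' ^ (1:ℝ) := Real.rpow_le_rpow_of_exponent_le hK'1 (by linarith)
        _ = K' := Real.rpow_one K'
    have h5 : B ^ (α/2) * B ^ (1 - α/2) = B := by
      rw [← Real.rpow_add hBpos]; norm_num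
    have h6 : B / K' ≤ B ^ (α/2) * Lr ^ (1 - α/2) := by
      have hKe : 0 < K' ^ (1 - α/2) := Real.rpow_pos_of_pos hK'0 _
      calc B / K' ≤ B / K' ^ (1 - α/2) := by
            apply div_le_div_of_nonneg_left hBpos.le hKe h4
        _ = B ^ (α/2) * B ^ (1 - α/2) / K' ^ (1 - α/2) := by rw [h5]
        _ = B ^ (α/2) * (B ^ (1 - α/2) / K' ^ (1 - α/2)) := by ring
        _ = B ^ (α/2) * (B/K') ^ (1 - α/2) := by rw [h3]
        _ ≤ B ^ (α/2) * Lr ^ (1 - α/2) := by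
            apply mul_le_mul_of_nonneg_left h2 (by positivity)
    calc (w / K') * B = w * (B / K') := by ring
      _ ≤ w * (B ^ (α/2) * Lr ^ (1 - α/2)) := by
          apply mul_le_mul_of_nonneg_left h6 (by linarith)
      _ = A := hAeq.symm
  -- φ ≥ d B + A/Lr + γ √Lr
  have hstep3 : (d:ℝ) * B + A/Lr + γ * Lr ^ ((1:ℝ)/2) ≤ φ := by
    have hd0 : (0:ℝ) ≤ (d:ℝ) := Nat.cast_nonneg d
    set sB := B ^ ((1:ℝ)/2) with hsBd
    set sL := Lr ^ ((1:ℝ)/2) with hsLd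
    set sK := K' ^ ((1:ℝ)/2) with hsKd
    have hsK0 : 0 < sK := Real.rpow_pos_of_pos hK'0 _
    have hQ : (1:ℝ) ≤ sB * sL := by
      calc (1:ℝ) = 1 * 1 := by norm_num
        _ ≤ sB * sL := mul_le_mul hsB1 hsL1 zero_le_one (by positivity)
    refine le_min ?_ ?_
    · -- arm 1
      have e0 : c₁ * (y * Lr ^ (1 - 1/α)) = c₁ * w ^ ((1:ℝ)/α) * (sB * sL) := by
        rw [hf1]; ring
      have e1 : c₁ * w * (sB * sL) ≤ c₁ * w ^ ((1:ℝ)/α) * (sB * sL) := by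
        apply mul_le_mul_of_nonneg_right _ (by positivity)
        exact mul_le_mul_of_nonneg_left hf2 hc₁.le
      have goal1 : (d:ℝ) * B ≤ (c₁/2) * w * (sB * sL) := by
        have hq1 : (d:ℝ) * B ≤ d * (sK * (sB * sL)) :=
          mul_le_mul_of_nonneg_left hf3 hd0
        have hq2 : (d:ℝ) * sK ≤ (c₁/2) * w := by
          rw [div_le_iff₀ hc₁] at hω2
          linarith
        have hq3 := mul_le_mul_of_nonneg_right hq2 (by positivity : (0:ℝ) ≤ sB * sL)
        have hq4 : (d:ℝ) * (sK * (sB * sL)) = (d:ℝ) * sK * (sB * sL) := by ring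
        linarith [hq1, hq4 ▸ hq1, hq3]
      have goal2 : A/Lr ≤ (c₁/4) * w * (sB * sL) := by
        have hq1 : K' ≤ (c₁/4) * sL := by
          calc K' = (c₁/4) * (4*K'/c₁) := by field_simp
            _ ≤ (c₁/4) * sL := by
                apply mul_le_mul_of_nonneg_left hsLK (by positivity)
        have hq2 : w * K' ≤ (c₁/4) * w * sL := by
          calc w * K' ≤ w * ((c₁/4) * sL) := by
                apply mul_le_mul_of_nonneg_left hq1 (by linarith)
            _ = (c₁/4) * w * sL := by ring
        refine hf4.trans (hq2.trans ?_)
        have hsL0 : (0:ℝ) ≤ sL := (Real.rpow_pos_of_pos hLr0 _).le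
        have h5 : sL ≤ sB * sL := le_mul_of_one_le_left hsL0 hsB1
        have h6 : 0 ≤ (c₁/4) * w := by positivity
        calc (c₁/4) * w * sL = (c₁/4) * w * sL := rfl
          _ ≤ (c₁/4) * w * (sB * sL) := mul_le_mul_of_nonneg_left h5 h6
      have goal3 : γ * sL ≤ (c₁/4) * w * (sB * sL) := by
        have hγc : γ ≤ c₁/4 := min_le_left _ _
        have hsL0 : (0:ℝ) < sL := Real.rpow_pos_of_pos hLr0 _
        have h5 : sL ≤ sB * sL := le_mul_of_one_le_left hsL0.le hsB1
        have h6 : sB * sL ≤ w * (sB * sL) := le_mul_of_one_le_left (by positivity) hω1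
        calc γ * sL ≤ (c₁/4) * sL := mul_le_mul_of_nonneg_right hγc hsL0.le
          _ ≤ (c₁/4) * (sB * sL) := mul_le_mul_of_nonneg_left h5 (by positivity)
          _ ≤ (c₁/4) * (w * (sB * sL)) := mul_le_mul_of_nonneg_left h6 (by positivity)
          _ = (c₁/4) * w * (sB * sL) := by ring
      calc (d:ℝ) * B + A/Lr + γ * sL
          ≤ (c₁/2) * w * (sB * sL) + (c₁/4) * w * (sB * sL) + (c₁/4) * w * (sB * sL) := by
            linarith
        _ = c₁ * w * (sB * sL) := by ring
        _ ≤ c₁ * w ^ ((1:ℝ)/α) * (sB * sL) := e1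
        _ = c₁ * (y * Lr ^ (1 - 1/α)) := e0.symm
    · -- arm 2
      have hq1 : A/Lr ≤ A/4 := by
        apply div_le_div_of_nonneg_left hApos.le (by norm_num) hLr4
      have hq2 : (d:ℝ) * B ≤ A/8 := by
        have h1 : 8*(d:ℝ)*B ≤ (w/K') * B := by
          apply mul_le_mul_of_nonneg_right _ hBpos.le
          rw [le_div_iff₀ hK'0]
          linarith [hω3]
        linarith [hf6, h1]
      have hq3 : γ * Lr ^ ((1:ℝ)/2) ≤ A/8 := by
        have hγ8 : γ ≤ 1/8 := min_le_right _ _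
        have h1 : Lr ^ ((1:ℝ)/2) ≤ A := by
          calc Lr ^ ((1:ℝ)/2) = 1 * Lr ^ ((1:ℝ)/2) := (one_mul _).symm
            _ ≤ w * Lr ^ ((1:ℝ)/2) := by
                apply mul_le_mul_of_nonneg_right hω1 (by positivity)
            _ ≤ A := hf5
        have h0 : (0:ℝ) ≤ Lr ^ ((1:ℝ)/2) := (Real.rpow_pos_of_pos hLr0 _).le
        calc γ * Lr ^ ((1:ℝ)/2) ≤ (1/8) * A := mul_le_mul hγ8 h1 h0 (by norm_num)
          _ = A/8 := by ring
      linarith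
  -- conclude
  have h1Lr : 0 < 1 - 1/Lr := by
    have h0 : 1/Lr ≤ 1/4 := by
      apply div_le_div_of_nonneg_left one_pos.le (by norm_num) hLr4
    linarith
  have hdB0 : (0:ℝ) ≤ (d:ℝ) * B := by positivity
  have hkey : Lr + γ * Lr ^ ((1:ℝ)/2) - 1 ≤ (1 - 1/Lr) * (W - d * B) := by
    have hq : (1 - 1/Lr) * (W - d*B) = (W - d*B) - (W - d*B)/Lr := by ring
    have hnum : W - d*B ≤ Lr + A := by linarith [hWle]
    have h2 : (W - d*B)/Lr ≤ (Lr + A)/Lr := div_le_div_of_nonneg_right hnum hLr0.le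
    have h3 : (Lr + A)/Lr = 1 + A/Lr := by field_simp
    have h2' : (W - d*B)/Lr ≤ 1 + A/Lr := h3 ▸ h2
    rw [hq]
    linarith [hstep1, hstep3, h2']
  linarith [hkey]

/-- **Largest eigenvalue of random tree-networks with bounded degree, case `0 < α ≤ 1`.** -/
theorem tree_network_largest_eigenvalue_heavy
    (α : ℝ) (hα : 0 < α) (hα1 : α ≤ 1)
    (c : ℝ) (hc : 0 < c) (d : ℕ) (hd : 3 ≤ d)
    (C₁ C₂ : ℝ) (hC₁ : 0 < C₁) (hC₂ : 0 < C₂)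
    (b : ℕ → ℝ) (hbpos : ∀ n, 0 < b n)
    (hbtop : Tendsto (fun n => b n / Real.log (Real.log n)) atTop atTop)
    (hbO : ∃ K : ℝ, ∀ᶠ n in atTop, b n ≤ K * Real.log n)
    (a : ℕ → ℝ) (hapos : ∀ n, 0 < a n)
    (v : ℕ → ℕ) (T : ∀ n, SimpleGraph (Fin (v n)))
    (hT : ∀ n, (T n).IsTree) (hTdeg : ∀ n, MaxDegLE (T n) d)
    (hVsize : ∀ᶠ n in atTop, (v n : ℝ) ≤ c * Real.log n / b n)
    (Ω : ℕ → Type*) [∀ n, MeasurableSpace (Ω n)]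
    (P : ∀ n, Measure (Ω n)) [∀ n, IsProbabilityMeasure (P n)]
    (Y : ∀ n, Ω n → Fin (v n) → Fin (v n) → ℝ)
    (hYmeas : ∀ n, Measurable (Y n))
    (hYsymm : ∀ n ω i j, Y n ω i j = Y n ω j i)
    (μ : ℕ → Measure ℝ) (hμ : ∀ n, IsWeibull α C₁ C₂ (μ n))
    (hYlaw : ∀ n, ∀ i j : Fin (v n), (T n).Adj i j →
      Measure.map (fun ω => Y n ω i j) (P n) =
        ProbabilityTheory.cond (μ n) {x : ℝ | b n ^ (1 / α) < |x|})
    (hYindep : ∀ n, iIndepFun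
      (fun (e : {p : Fin (v n) × Fin (v n) // p.1 < p.2 ∧ (T n).Adj p.1 p.2})
        (ω : Ω n) => Y n ω e.1.1 e.1.2) (P n))
    (hatop : Tendsto
      (fun n => a n / (b n ^ (α / 2) * Real.log n ^ (1 - α / 2)))
      atTop atTop) :
    Tendsto
      (fun n : ℕ => ((n : ℕ) : ℝ≥0∞) *
        P n {ω | Real.log n ^ (1 / α) + a n ^ (1 / α) ≤
          lam1 (weightedAdj (T n) (Y n ω))})
      atTop (nhds 0) := by
  classical
  have hTdec : ∀ n, DecidableRel (T n).Adj := fun n => Classical.decRel _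
  set K₀ : ℝ := 2 * C₂ * Real.exp 1 / C₁ with hK₀def
  have hK₀ : 0 < K₀ := by positivity
  set L : ℕ → ℝ := fun n => Real.log n with hLdef
  have hL : Tendsto L atTop atTop :=
    Real.tendsto_log_atTop.comp tendsto_natCast_atTop_atTop
  have hLL : Tendsto (fun n : ℕ => Real.log (L n)) atTop atTop :=
    Real.tendsto_log_atTop.comp hL
  have hb1 : ∀ᶠ n in atTop, 1 ≤ b n := by
    filter_upwards [hbtop.eventually_ge_atTop 1, hLL.eventually_ge_atTop 1] with n h1 h2
    have h3 : 0 < Real.log (Real.log n) := by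
      have h4 : Real.log (L n) = Real.log (Real.log n) := rfl
      linarith [h4 ▸ h2]
    rw [le_div_iff₀ h3, one_mul] at h1
    have h2' : 1 ≤ Real.log (Real.log n) := by
      have h4 : Real.log (L n) = Real.log (Real.log n) := rfl
      linarith [h4 ▸ h2]
    linarith
  set Efun : ℕ → ℝ := fun n => L n + Real.log (c * L n)
      + d * Real.log (2 + K₀ * L n)
      - (1 - 1/L n) * ((L n ^ (1/α) + a n ^ (1/α)) ^ α - d * b n) with hEfun
  have hEbound : ∀ᶠ n in atTop, ((n : ℕ) : ℝ≥0∞) *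
      P n {ω | Real.log n ^ (1 / α) + a n ^ (1 / α) ≤
        lam1 (weightedAdj (T n) (Y n ω))} ≤ ENNReal.ofReal (Real.exp (Efun n)) := by
    filter_upwards [hb1, hVsize, hL.eventually_ge_atTop 4, eventually_ge_atTop 1]
      with n hB1 hV hL4 hn1
    have hLr0 : (0:ℝ) < L n := by linarith
    have hLrne : L n ≠ 0 := hLr0.ne'
    set θ : ℝ := 1 - 1/L n with hθdef
    have hinv : 1/L n ≤ 1/4 := by
      apply div_le_div_of_nonneg_left one_pos.le (by norm_num) hL4
    have hθ0 : 0 < θ := by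
      rw [hθdef]; linarith
    have hθ1 : θ < 1 := by
      rw [hθdef]
      have : 0 < 1/L n := by positivity
      linarith
    haveI instμ : IsProbabilityMeasure (μ n) := (hμ n).1
    have hSne : μ n {x : ℝ | b n ^ (1/α) < |x|} ≠ 0 :=
      condS_ne_zero hα hα1 hC₁ hB1 (hμ n)
    haveI instν : IsProbabilityMeasure ((μ n)[|{x : ℝ | b n ^ (1/α) < |x|}]) :=
      cond_isProbabilityMeasure hSne
    set Zb : ℝ → ℝ := fun x => max (|x| ^ α - b n) 0 with hZbdef
    have hZm : Measurable Zb := by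
      rw [hZbdef]
      fun_prop
    have hZ0 : ∀ x, 0 ≤ Zb x := fun x => le_max_right _ _
    have htail : ∀ s : ℝ, 0 < s →
        (μ n)[|{x : ℝ | b n ^ (1/α) < |x|}] {x | s ≤ Zb x} ≤
          ENNReal.ofReal (K₀ * Real.exp (-s)) := by
      intro s hs
      rw [hK₀def]
      exact condS_tail hα hα1 hC₁ hC₂ hB1 (hμ n) hs
    obtain ⟨hint, hmgf⟩ := mgf_tail_bound hZm hZ0 hK₀ htail hθ0 hθ1
    set Mb : ℝ := 2 + K₀ * L n with hMbdef
    have hMb1 : (1:ℝ) ≤ Mb := by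
      have : 0 ≤ K₀ * L n := by positivity
      rw [hMbdef]; linarith
    have hMbeq : 2 + K₀ / (1 - θ) = Mb := by
      rw [hθdef, hMbdef]
      have h1 : 1 - (1 - 1/L n) = 1/L n := by ring
      rw [h1, div_div_eq_mul_div, div_one]
    set s : ℝ := (L n ^ (1/α) + a n ^ (1/α)) ^ α - d * b n with hsdef
    have hchern : ∀ i : Fin (v n),
        P n {ω | s ≤ ∑ e ∈ edgesAt (T n) i,
            Zb (Y n ω (e : EdgeIdx (T n)).1.1 (e : EdgeIdx (T n)).1.2)} ≤
          ENNReal.ofReal (Real.exp (-θ * s) * Mb ^ d) := by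
      intro i
      exact vertex_chernoff (T n) (P n) (Y n) (hYmeas n)
        ((μ n)[|{x : ℝ | b n ^ (1/α) < |x|}])
        (fun i j h => hYlaw n i j h) (hYindep n) hZm hθ0 hMb1 hint
        (hmgf.trans (le_of_eq hMbeq)) (fun i => edgesAt_card_le (T n) (hTdeg n) i) s i
    have hsub : {ω | Real.log n ^ (1 / α) + a n ^ (1 / α) ≤
        lam1 (weightedAdj (T n) (Y n ω))} ⊆
        ⋃ i : Fin (v n), {ω | s ≤ ∑ e ∈ edgesAt (T n) i,
          Zb (Y n ω (e : EdgeIdx (T n)).1.1 (e : EdgeIdx (T n)).1.2)} := by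
      intro ω hω
      have ht : (0:ℝ) < Real.log n ^ (1 / α) + a n ^ (1 / α) := by
        have h1 : (0:ℝ) < Real.log n ^ (1/α) := Real.rpow_pos_of_pos hLr0 _
        have h2 : (0:ℝ) < a n ^ (1/α) := Real.rpow_pos_of_pos (hapos n) _
        linarith
      obtain ⟨i, hi⟩ := vertex_sum_bound (T n) (hTdeg n) (Y n ω) (hYsymm n ω)
        hα hα1 (by linarith : (0:ℝ) ≤ b n) ht hω
      exact Set.mem_iUnion.2 ⟨i, hi⟩
    have hPE : P n {ω | Real.log n ^ (1 / α) + a n ^ (1 / α) ≤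
        lam1 (weightedAdj (T n) (Y n ω))} ≤
        (v n : ℝ≥0∞) * ENNReal.ofReal (Real.exp (-θ * s) * Mb ^ d) := by
      refine (measure_mono hsub).trans ?_
      refine (measure_iUnion_fintype_le _ _).trans ?_
      calc ∑ i : Fin (v n), P n {ω | s ≤ ∑ e ∈ edgesAt (T n) i,
              Zb (Y n ω (e : EdgeIdx (T n)).1.1 (e : EdgeIdx (T n)).1.2)}
          ≤ ∑ _i : Fin (v n), ENNReal.ofReal (Real.exp (-θ * s) * Mb ^ d) :=
            Finset.sum_le_sum (fun i _ => hchern i)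
        _ = (v n : ℝ≥0∞) * ENNReal.ofReal (Real.exp (-θ * s) * Mb ^ d) := by
            rw [Finset.sum_const, Finset.card_univ, Fintype.card_fin, nsmul_eq_mul]
    set β : ℝ := Real.exp (-θ * s) * Mb ^ d with hβdef
    have hβ0 : 0 ≤ β := by positivity
    have hnpos : (0:ℝ) < (n:ℝ) := by exact_mod_cast hn1
    have hreal : (n:ℝ) * ((v n : ℝ) * β) ≤ Real.exp (Efun n) := by
      have e1 : Real.exp (Efun n) = Real.exp (L n) * ((c * L n) * β) := by
        have hcL : (0:ℝ) < c * L n := by positivity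
        have hMb0 : (0:ℝ) < Mb := by linarith
        rw [show Efun n = L n + Real.log (c * L n) +
          ((d:ℝ) * Real.log Mb + (-θ * s)) by rw [hEfun, hMbdef, hθdef, hsdef]; ring]
        rw [Real.exp_add, Real.exp_add, Real.exp_add, Real.exp_log hcL]
        rw [Real.exp_nat_mul, Real.exp_log hMb0]
        rw [hβdef]; ring
      have e2 : (n:ℝ) = Real.exp (L n) := (Real.exp_log hnpos).symm
      have e3 : (v n : ℝ) ≤ c * L n := by
        refine hV.trans ?_
        have : (0:ℝ) ≤ c * L n := by positivity
        exact div_le_self this hB1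
      rw [e1, ← e2]
      apply mul_le_mul_of_nonneg_left _ hnpos.le
      exact mul_le_mul_of_nonneg_right e3 hβ0
    calc ((n : ℕ) : ℝ≥0∞) * P n {ω | Real.log n ^ (1 / α) + a n ^ (1 / α) ≤
            lam1 (weightedAdj (T n) (Y n ω))}
        ≤ ((n : ℕ) : ℝ≥0∞) * ((v n : ℝ≥0∞) * ENNReal.ofReal β) := by
          exact mul_le_mul_right hPE _
      _ = ENNReal.ofReal ((n:ℝ) * ((v n : ℝ) * β)) := by
          rw [ENNReal.ofReal_mul hnpos.le, ENNReal.ofReal_mul (Nat.cast_nonneg (v n)),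
            ENNReal.ofReal_natCast, ENNReal.ofReal_natCast]
      _ ≤ ENNReal.ofReal (Real.exp (Efun n)) := ENNReal.ofReal_le_ofReal hreal
  have hE : Tendsto Efun atTop atBot :=
    E_tendsto α c K₀ hα hα1 hc hK₀ d b a hbpos hapos hbtop hbO hatop
  have hexp : Tendsto (fun n => Real.exp (Efun n)) atTop (nhds 0) :=
    Real.tendsto_exp_atBot.comp hE
  have h2 : Tendsto (fun n => ENNReal.ofReal (Real.exp (Efun n))) atTop (nhds 0) := by
    have h3 := ENNReal.tendsto_ofReal hexp
    simpa using h3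
  exact tendsto_of_tendsto_of_tendsto_of_le_of_le' tendsto_const_nhds h2
    (Eventually.of_forall fun n => zero_le) hEbound
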